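/- arXiv:1001.2076 — 4 statements merged into one kernel-verified Lean document; each statement's English description precedes it below -/
import Mathlib

section
/- For any t₁, t₂ ∈ Λ_m, we have t₁ᴴt₂ + t₂ᴴt₁ = 0 if and only if the Hamming weight of φ(t₁) + φ(t₂) in F₂ ⊕ F₄^m is odd. -/
open Matrix

def X2 : Matrix (Fin 2) (Fin 2) ℂ := !![0, 1; 1, 0]
def Z2 : Matrix (Fin 2) (Fin 2) ℂ := !![1, 0; 0, -1]

def kronPow (m : ℕ) (B : Fin m → Matrix (Fin 2) (Fin 2) ℂ) :
    Matrix (Fin m → Fin 2) (Fin m → Fin 2) ℂ :=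
  Matrix.of fun i j => ∏ k, B k (i k) (j k)

noncomputable def skewPauliFam : Fin 4 → Matrix (Fin 2) (Fin 2) ℂ :=
  ![1, Complex.I • X2, Complex.I • Z2, Z2 * X2]

noncomputable def LamElt (m : ℕ) (p : ZMod 2 × (Fin m → Fin 4)) :
    Matrix (Fin m → Fin 2) (Fin m → Fin 2) ℂ :=
  Complex.I ^ (p.1.val) • kronPow m (fun k => skewPauliFam (p.2 k))

/-- Addition of F₄ transported to `Fin 4` via 0↔0, 1↔1, 2↔ω, 3↔ω². -/
def add4 : Fin 4 → Fin 4 → Fin 4 :=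
  ![![0, 1, 2, 3], ![1, 0, 3, 2], ![2, 3, 0, 1], ![3, 2, 1, 0]]

def addV {m : ℕ} (p q : ZMod 2 × (Fin m → Fin 4)) : ZMod 2 × (Fin m → Fin 4) :=
  (p.1 + q.1, fun k => add4 (p.2 k) (q.2 k))

def wtV {m : ℕ} (p : ZMod 2 × (Fin m → Fin 4)) : ℕ :=
  (if p.1 ≠ 0 then 1 else 0) + (Finset.univ.filter fun k => p.2 k ≠ 0).card

/-! ### Auxiliary definitions and lemmas -/

set_option maxHeartbeats 2000000

def eps : Fin 4 → Fin 4 → ℂ :=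
  ![![1,1,1,1], ![1,-1,1,-1], ![1,-1,-1,1], ![1,1,-1,-1]]

def epsH : Fin 4 → ℂ := ![1, -1, -1, -1]

def col4 : Fin 4 → Fin 2 := ![0, 1, 0, 1]

lemma skew_mul (a b : Fin 4) :
    skewPauliFam a * skewPauliFam b = eps a b • skewPauliFam (add4 a b) := by
  fin_cases a <;> fin_cases b <;>
    · ext i j
      fin_cases i <;> fin_cases j <;>
        simp [skewPauliFam, eps, add4, X2, Z2, Matrix.mul_apply, Fin.sum_univ_two,
          Complex.I_mul_I, Matrix.one_apply, Matrix.vecHead, Matrix.vecTail]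

lemma skew_conjT (a : Fin 4) : (skewPauliFam a)ᴴ = epsH a • skewPauliFam a := by
  fin_cases a <;>
    · ext i j
      fin_cases i <;> fin_cases j <;>
        simp [skewPauliFam, epsH, X2, Z2, Matrix.mul_apply, Fin.sum_univ_two,
          Matrix.one_apply, Matrix.conjTranspose_apply, Matrix.vecHead, Matrix.vecTail]

lemma skew_entry_ne (a : Fin 4) : skewPauliFam a 0 (col4 a) ≠ 0 := by
  fin_cases a <;>
    simp [skewPauliFam, col4, X2, Z2, Matrix.one_apply, Matrix.mul_apply, Fin.sum_univ_two,
      Complex.I_ne_zero, Matrix.vecHead, Matrix.vecTail]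

lemma eps_ne (a b : Fin 4) : eps a b ≠ 0 := by
  fin_cases a <;> fin_cases b <;>
    norm_num [eps, Matrix.vecHead, Matrix.vecTail]

lemma eps_real (a b : Fin 4) : star (eps a b) = eps a b := by
  fin_cases a <;> fin_cases b <;>
    simp [eps, Matrix.vecHead, Matrix.vecTail]

lemma epsH_ne (a : Fin 4) : epsH a ≠ 0 := by
  fin_cases a <;> norm_num [epsH, Matrix.vecHead, Matrix.vecTail]

lemma epsH_real (a : Fin 4) : star (epsH a) = epsH a := by
  fin_cases a <;> simp [epsH, Matrix.vecHead, Matrix.vecTail]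

lemma epsH_eq (a : Fin 4) : epsH a = (-1 : ℂ) ^ (if a ≠ 0 then 1 else 0) := by
  fin_cases a <;> simp [epsH, Matrix.vecHead, Matrix.vecTail]

lemma kronPow_conjT (m : ℕ) (B : Fin m → Matrix (Fin 2) (Fin 2) ℂ) :
    (kronPow m B)ᴴ = kronPow m (fun k => (B k)ᴴ) := by
  ext i j
  simp [kronPow, Matrix.conjTranspose_apply, star_prod]

lemma kronPow_mul (m : ℕ) (B C : Fin m → Matrix (Fin 2) (Fin 2) ℂ) :
    kronPow m B * kronPow m C = kronPow m (fun k => B k * C k) := by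
  ext i j
  simp only [kronPow, Matrix.mul_apply, Matrix.of_apply]
  rw [Finset.prod_univ_sum, Fintype.piFinset_univ]
  exact Finset.sum_congr rfl fun x _ => (Finset.prod_mul_distrib).symm

lemma kronPow_smul (m : ℕ) (c : Fin m → ℂ) (B : Fin m → Matrix (Fin 2) (Fin 2) ℂ) :
    kronPow m (fun k => c k • B k) = (∏ k, c k) • kronPow m B := by
  ext i j
  simp [kronPow, Finset.prod_mul_distrib, Matrix.smul_apply, smul_eq_mul]

noncomputable def cph (a b : ZMod 2) : ℂ :=
  star (Complex.I ^ a.val) * Complex.I ^ b.val * (Complex.I ^ (a + b).val)⁻¹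

lemma cph_real (a b : ZMod 2) : star (cph a b) = cph a b := by
  obtain rfl | rfl : a = 0 ∨ a = 1 := by revert a; decide
  all_goals obtain rfl | rfl : b = 0 ∨ b = 1 := by revert b; decide
  all_goals
    simp [cph, Complex.inv_I, (by decide : ((1:ZMod 2)).val = 1),
      (by decide : ((1+1:ZMod 2)).val = 0)]

lemma cph_ne (a b : ZMod 2) : cph a b ≠ 0 := by
  fin_cases a <;> fin_cases b <;>
    simp [cph, Complex.I_ne_zero, (by decide : ((1:ZMod 2)).val = 1),
      (by decide : ((1+1:ZMod 2)).val = 0)]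

lemma star_I_pow (a : ZMod 2) :
    star (Complex.I ^ a.val) = (-1 : ℂ) ^ a.val * Complex.I ^ a.val := by
  fin_cases a <;> simp [ZMod.val, (by decide : ((1:ZMod 2)).val = 1)]

lemma zmod_val_ite (a : ZMod 2) : a.val = if a ≠ 0 then 1 else 0 := by
  fin_cases a <;> decide

lemma prod_epsH (m : ℕ) (f : Fin m → Fin 4) :
    (∏ k, epsH (f k)) = (-1 : ℂ) ^ (Finset.univ.filter fun k => f k ≠ 0).card := by
  simp only [epsH_eq]
  rw [Finset.prod_pow_eq_pow_sum]
  congr 1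
  rw [Finset.card_filter]

lemma LamElt_conjT (m : ℕ) (s : ZMod 2 × (Fin m → Fin 4)) :
    (LamElt m s)ᴴ = ((-1 : ℂ) ^ wtV s) • LamElt m s := by
  unfold LamElt
  rw [Matrix.conjTranspose_smul, kronPow_conjT]
  simp only [skew_conjT]
  rw [kronPow_smul, prod_epsH, star_I_pow, smul_smul, smul_smul]
  congr 1
  rw [wtV, ← zmod_val_ite, pow_add]
  ring

lemma LamElt_mul (m : ℕ) (p q : ZMod 2 × (Fin m → Fin 4)) :
    ∃ c : ℂ, c ≠ 0 ∧ star c = c ∧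
      (LamElt m p)ᴴ * LamElt m q = c • LamElt m (addV p q) := by
  refine ⟨cph p.1 q.1 * ∏ k, (epsH (p.2 k) * eps (p.2 k) (q.2 k)), ?_, ?_, ?_⟩
  · exact mul_ne_zero (cph_ne _ _)
      (Finset.prod_ne_zero_iff.2 fun k _ => mul_ne_zero (epsH_ne _) (eps_ne _ _))
  · rw [star_mul', star_prod, cph_real]
    congr 1
    exact Finset.prod_congr rfl fun k _ => by rw [star_mul', epsH_real, eps_real]
  · unfold LamElt addV
    rw [Matrix.conjTranspose_smul, kronPow_conjT]
    simp only [skew_conjT]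
    rw [kronPow_smul, star_I_pow]
    simp only [smul_mul_assoc, mul_smul_comm, smul_smul]
    rw [kronPow_mul]
    simp only [skew_mul]
    rw [kronPow_smul, smul_smul]
    congr 1
    rw [cph, star_I_pow, Finset.prod_mul_distrib]
    have h1 : (Complex.I ^ (p.1 + q.1).val) ≠ 0 := pow_ne_zero _ Complex.I_ne_zero
    field_simp

lemma LamElt_ne (m : ℕ) (s : ZMod 2 × (Fin m → Fin 4)) : LamElt m s ≠ 0 := by
  intro h
  have h0 : LamElt m s (fun _ => 0) (fun k => col4 (s.2 k)) = 0 := by rw [h]; rfl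
  simp only [LamElt, Matrix.smul_apply, smul_eq_mul, kronPow, Matrix.of_apply] at h0
  exact (mul_ne_zero (pow_ne_zero _ Complex.I_ne_zero)
    (Finset.prod_ne_zero_iff.2 fun k _ => skew_entry_ne _)) h0

theorem LamElt_HR_orthogonal_iff_odd (m : ℕ) (p q : ZMod 2 × (Fin m → Fin 4)) :
    (LamElt m p)ᴴ * LamElt m q + (LamElt m q)ᴴ * LamElt m p = 0 ↔
      Odd (wtV (addV p q)) := by
  obtain ⟨c, hc0, hcs, hmul⟩ := LamElt_mul m p q
  have h2 : (LamElt m q)ᴴ * LamElt m p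
      = (c * (-1 : ℂ) ^ wtV (addV p q)) • LamElt m (addV p q) := by
    have h := congrArg conjTranspose hmul
    rw [Matrix.conjTranspose_mul, Matrix.conjTranspose_conjTranspose] at h
    rw [h, Matrix.conjTranspose_smul, LamElt_conjT, hcs, smul_smul]
  rw [hmul, h2, ← add_smul]
  constructor
  · intro h
    rcases smul_eq_zero.1 h with hc | hM
    · by_contra hodd
      have hev : Even (wtV (addV p q)) := Nat.not_odd_iff_even.mp hodd
      rw [hev.neg_one_pow] at hc
      exact hc0 (by linear_combination hc / 2)
    · exact absurd hM (LamElt_ne m _)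
  · intro hodd
    rw [hodd.neg_one_pow, show c + c * (-1) = 0 by ring, zero_smul]
end

section
/- Let 𝓑 = { i^λ E_α : λ ∈ {0,1}, α ⊆ {1,...,2m} } where E_α is the ordered product of generators E_k coming from the Clifford-algebra representation (E_s = i(Z^{⊗(s-1)} ⊗ iXZ ⊗ I₂^{⊗(m-s)}), E_{s+m} = i(Z^{⊗(s-1)} ⊗ X ⊗ I₂^{⊗(m-s)}) for s = 1,...,m). Then 𝓑 ∪ (−𝓑) equals the Pauli group G_m = { i^μ B₁⊗...⊗B_m : μ ∈ ℤ₄, B_k ∈ {I₂, X, Z, iXZ} }, and 𝓑 ∩ (−𝓑) = ∅. -/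
open Matrix

/-- Clifford generators: for s = 1,…,m,
E_s = i(Z^{⊗(s-1)} ⊗ iXZ ⊗ I₂^{⊗(m-s)}), E_{s+m} = i(Z^{⊗(s-1)} ⊗ X ⊗ I₂^{⊗(m-s)}). -/
noncomputable def Egen (m : ℕ) (k : Fin (2 * m)) :
    Matrix (Fin m → Fin 2) (Fin m → Fin 2) ℂ :=
  Complex.I • kronPow m (fun j =>
    if k.val < m then
      (if j.val < k.val then Z2
       else if j.val = k.val then Complex.I • (X2 * Z2) else 1)
    else
      (if j.val < k.val - m then Z2
       else if j.val = k.val - m then X2 else 1))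

/-- Ordered product E_α = E_{i₁}⋯E_{i_r} for α = {i₁ < ⋯ < i_r}, E_∅ = I. -/
noncomputable def Eprod (m : ℕ) (α : Finset (Fin (2 * m))) :
    Matrix (Fin m → Fin 2) (Fin m → Fin 2) ℂ :=
  ((α.sort (· ≤ ·)).map (Egen m)).prod

/-- 𝓑 = { i^λ E_α : λ ∈ {0,1}, α ⊆ {1,…,2m} }. -/
noncomputable def Bset (m : ℕ) : Set (Matrix (Fin m → Fin 2) (Fin m → Fin 2) ℂ) :=
  { A | ∃ (l : ZMod 2) (α : Finset (Fin (2 * m))),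
      A = Complex.I ^ l.val • Eprod m α }

/-- I₂, X, Z, iXZ, indexed by `Fin 4`. -/
noncomputable def pauliFam : Fin 4 → Matrix (Fin 2) (Fin 2) ℂ :=
  ![1, X2, Z2, Complex.I • (X2 * Z2)]

/-- The Pauli group G_m = { i^μ B₁ ⊗ ⋯ ⊗ B_m : μ ∈ ℤ₄, B_k ∈ {I₂, X, Z, iXZ} }. -/
noncomputable def PauliGroup (m : ℕ) :
    Set (Matrix (Fin m → Fin 2) (Fin m → Fin 2) ℂ) :=
  { A | ∃ (μ : ZMod 4) (B : Fin m → Fin 4),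
      A = Complex.I ^ μ.val • kronPow m (fun k => pauliFam (B k)) }

variable {m : ℕ}

lemma kron_mul (B C : Fin m → Matrix (Fin 2) (Fin 2) ℂ) :
    kronPow m B * kronPow m C = kronPow m fun k => B k * C k := by
  ext i j
  simp only [kronPow, Matrix.mul_apply, Matrix.of_apply]
  rw [Fintype.prod_sum fun k t => B k (i k) t * C k t (j k)]
  exact Finset.sum_congr rfl fun x _ => (Finset.prod_mul_distrib).symm

lemma kron_smul (c : Fin m → ℂ) (B : Fin m → Matrix (Fin 2) (Fin 2) ℂ) :
    kronPow m (fun k => c k • B k) = (∏ k, c k) • kronPow m B := by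
  ext i j
  simp [kronPow, Finset.prod_mul_distrib, Matrix.smul_apply, smul_eq_mul]

lemma kron_one : kronPow m (fun _ => (1 : Matrix (Fin 2) (Fin 2) ℂ)) = 1 := by
  ext i j
  simp only [kronPow, Matrix.of_apply, Matrix.one_apply]
  by_cases h : i = j
  · subst h; simp
  · rw [if_neg h]
    obtain ⟨k, hk⟩ := Function.ne_iff.mp h
    exact Finset.prod_eq_zero (Finset.mem_univ k) (by simp [Matrix.one_apply, hk])

lemma kron_conjT (B : Fin m → Matrix (Fin 2) (Fin 2) ℂ) :
    (kronPow m B)ᴴ = kronPow m fun k => (B k)ᴴ := by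
  ext i j
  simp [kronPow, Matrix.conjTranspose_apply, map_prod]

lemma kron_trace (B : Fin m → Matrix (Fin 2) (Fin 2) ℂ) :
    (kronPow m B).trace = ∏ k, (B k).trace := by
  simp only [Matrix.trace, Matrix.diag, kronPow, Matrix.of_apply]
  rw [Fintype.prod_sum fun k t => B k t t]
lemma Ipow_mod (n : ℕ) : Complex.I ^ n = Complex.I ^ (n % 4) := by
  conv_lhs => rw [← Nat.div_add_mod n 4, pow_add, pow_mul, Complex.I_pow_four, one_pow, one_mul]

lemma Ipow_val_add (a b : ZMod 4) :
    Complex.I ^ (a + b).val = Complex.I ^ a.val * Complex.I ^ b.val := by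
  rw [← pow_add, Ipow_mod (a.val + b.val), ZMod.val_add]

lemma Ipow_val_sum {ι : Type*} (s : Finset ι) (f : ι → ZMod 4) :
    ∏ k ∈ s, Complex.I ^ (f k).val = Complex.I ^ (∑ k ∈ s, f k).val := by
  induction s using Finset.cons_induction with
  | empty => simp
  | cons a s ha ih => rw [Finset.prod_cons, Finset.sum_cons, Ipow_val_add, ih]

lemma Ipow_inj {a b : ZMod 4} (h : Complex.I ^ a.val = Complex.I ^ b.val) : a = b := by
  have ha : a.val < 4 := a.val_lt
  have hb : b.val < 4 := b.val_lt
  have hv : a.val = b.val := by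
    set x := a.val with hx
    set y := b.val with hy
    clear_value x y
    interval_cases x <;> interval_cases y <;>
      first
        | omega
        | (exfalso; norm_num [pow_succ, Complex.ext_iff] at h)
  exact ZMod.val_injective 4 hv
def idx1 (m : ℕ) (j : Fin m) : Fin (2 * m) := ⟨j.val, by omega⟩
def idx2 (m : ℕ) (j : Fin m) : Fin (2 * m) := ⟨j.val + m, by omega⟩

def site (m : ℕ) (k : Fin (2 * m)) : ℕ := if k.val < m then k.val else k.val - m

def e1 (α : Finset (Fin (2 * m))) (j : Fin m) : ZMod 2 := if idx1 m j ∈ α then 1 else 0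
def e2 (α : Finset (Fin (2 * m))) (j : Fin m) : ZMod 2 := if idx2 m j ∈ α then 1 else 0
def cntZ (α : Finset (Fin (2 * m))) (j : Fin m) : ZMod 2 :=
  ((α.filter fun k => j.val < site m k).card : ZMod 2)

def pair (x z : ZMod 2) : Fin 4 :=
  ⟨x.val + 2 * z.val, by have := x.val_lt; have := z.val_lt; omega⟩

def Lfun (α : Finset (Fin (2 * m))) (j : Fin m) : Fin 4 :=
  pair (e1 α j + e2 α j) (e1 α j + cntZ α j)

def eL (m : ℕ) (k : Fin (2 * m)) (j : Fin m) : Fin 4 :=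
  if k.val < m then
    (if j.val < k.val then 2 else if j.val = k.val then 3 else 0)
  else
    (if j.val < k.val - m then 2 else if j.val = k.val - m then 1 else 0)

def pxor (a b : Fin 4) : Fin 4 :=
  ⟨a.val ^^^ b.val, by
    have h : ∀ x y : Fin 4, x.val ^^^ y.val < 4 := by decide
    exact h a b⟩

lemma Egen_eq (k : Fin (2 * m)) :
    Egen m k = Complex.I ^ (1 : ZMod 4).val • kronPow m fun j => pauliFam (eL m k j) := by
  have h1 : ((1 : ZMod 4).val) = 1 := rfl
  rw [h1, pow_one]
  unfold Egen
  have : (fun (j : Fin m) =>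
      if k.val < m then
        (if j.val < k.val then Z2
         else if j.val = k.val then Complex.I • (X2 * Z2) else 1)
      else
        (if j.val < k.val - m then Z2
         else if j.val = k.val - m then X2 else 1)) = fun j => pauliFam (eL m k j) := by
    funext j
    simp only [eL]
    split_ifs <;> rfl
  rw [this]

lemma xor_pair (x z x' z' : ZMod 2) :
    pxor (pair x z) (pair x' z') = pair (x + x') (z + z') := by
  revert x z x' z'; decide

lemma pair_inj {x z x' z' : ZMod 2} (h : pair x z = pair x' z') : x = x' ∧ z = z' := by
  revert h; revert x z x' z'; decide

lemma zv0 : (0 : ZMod 4).val = 0 := rfl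
lemma zv1 : (1 : ZMod 4).val = 1 := rfl
lemma zv2 : (2 : ZMod 4).val = 2 := rfl
lemma zv3 : (3 : ZMod 4).val = 3 := rfl

lemma letter_mul (a b : Fin 4) : ∃ p : ZMod 4,
    pauliFam a * pauliFam b = Complex.I ^ p.val • pauliFam (pxor a b) := by
  fin_cases a <;> fin_cases b
  · exact ⟨0, by
          ext i j; fin_cases i <;> fin_cases j <;>
            simp [pauliFam, pxor, X2, Z2, Matrix.mul_apply, Fin.sum_univ_two, Matrix.one_apply,
              Matrix.smul_apply, zv0, zv1, zv2, zv3, pow_succ, Complex.ext_iff]⟩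
  · exact ⟨0, by
          ext i j; fin_cases i <;> fin_cases j <;>
            simp [pauliFam, pxor, X2, Z2, Matrix.mul_apply, Fin.sum_univ_two, Matrix.one_apply,
              Matrix.smul_apply, zv0, zv1, zv2, zv3, pow_succ, Complex.ext_iff]⟩
  · exact ⟨0, by
          ext i j; fin_cases i <;> fin_cases j <;>
            simp [pauliFam, pxor, X2, Z2, Matrix.mul_apply, Fin.sum_univ_two, Matrix.one_apply,
              Matrix.smul_apply, zv0, zv1, zv2, zv3, pow_succ, Complex.ext_iff]⟩
  · exact ⟨0, by
          ext i j; fin_cases i <;> fin_cases j <;>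
            simp [pauliFam, pxor, X2, Z2, Matrix.mul_apply, Fin.sum_univ_two, Matrix.one_apply,
              Matrix.smul_apply, zv0, zv1, zv2, zv3, pow_succ, Complex.ext_iff]⟩
  · exact ⟨0, by
          ext i j; fin_cases i <;> fin_cases j <;>
            simp [pauliFam, pxor, X2, Z2, Matrix.mul_apply, Fin.sum_univ_two, Matrix.one_apply,
              Matrix.smul_apply, zv0, zv1, zv2, zv3, pow_succ, Complex.ext_iff]⟩
  · exact ⟨0, by
          ext i j; fin_cases i <;> fin_cases j <;>
            simp [pauliFam, pxor, X2, Z2, Matrix.mul_apply, Fin.sum_univ_two, Matrix.one_apply,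
              Matrix.smul_apply, zv0, zv1, zv2, zv3, pow_succ, Complex.ext_iff]⟩
  · exact ⟨3, by
          ext i j; fin_cases i <;> fin_cases j <;>
            simp [pauliFam, pxor, X2, Z2, Matrix.mul_apply, Fin.sum_univ_two, Matrix.one_apply,
              Matrix.smul_apply, zv0, zv1, zv2, zv3, pow_succ, Complex.ext_iff]⟩
  · exact ⟨1, by
          ext i j; fin_cases i <;> fin_cases j <;>
            simp [pauliFam, pxor, X2, Z2, Matrix.mul_apply, Fin.sum_univ_two, Matrix.one_apply,
              Matrix.smul_apply, zv0, zv1, zv2, zv3, pow_succ, Complex.ext_iff]⟩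
  · exact ⟨0, by
          ext i j; fin_cases i <;> fin_cases j <;>
            simp [pauliFam, pxor, X2, Z2, Matrix.mul_apply, Fin.sum_univ_two, Matrix.one_apply,
              Matrix.smul_apply, zv0, zv1, zv2, zv3, pow_succ, Complex.ext_iff]⟩
  · exact ⟨1, by
          ext i j; fin_cases i <;> fin_cases j <;>
            simp [pauliFam, pxor, X2, Z2, Matrix.mul_apply, Fin.sum_univ_two, Matrix.one_apply,
              Matrix.smul_apply, zv0, zv1, zv2, zv3, pow_succ, Complex.ext_iff]⟩
  · exact ⟨0, by
          ext i j; fin_cases i <;> fin_cases j <;>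
            simp [pauliFam, pxor, X2, Z2, Matrix.mul_apply, Fin.sum_univ_two, Matrix.one_apply,
              Matrix.smul_apply, zv0, zv1, zv2, zv3, pow_succ, Complex.ext_iff]⟩
  · exact ⟨3, by
          ext i j; fin_cases i <;> fin_cases j <;>
            simp [pauliFam, pxor, X2, Z2, Matrix.mul_apply, Fin.sum_univ_two, Matrix.one_apply,
              Matrix.smul_apply, zv0, zv1, zv2, zv3, pow_succ, Complex.ext_iff]⟩
  · exact ⟨0, by
          ext i j; fin_cases i <;> fin_cases j <;>
            simp [pauliFam, pxor, X2, Z2, Matrix.mul_apply, Fin.sum_univ_two, Matrix.one_apply,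
              Matrix.smul_apply, zv0, zv1, zv2, zv3, pow_succ, Complex.ext_iff]⟩
  · exact ⟨3, by
          ext i j; fin_cases i <;> fin_cases j <;>
            simp [pauliFam, pxor, X2, Z2, Matrix.mul_apply, Fin.sum_univ_two, Matrix.one_apply,
              Matrix.smul_apply, zv0, zv1, zv2, zv3, pow_succ, Complex.ext_iff]⟩
  · exact ⟨1, by
          ext i j; fin_cases i <;> fin_cases j <;>
            simp [pauliFam, pxor, X2, Z2, Matrix.mul_apply, Fin.sum_univ_two, Matrix.one_apply,
              Matrix.smul_apply, zv0, zv1, zv2, zv3, pow_succ, Complex.ext_iff]⟩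
  · exact ⟨0, by
          ext i j; fin_cases i <;> fin_cases j <;>
            simp [pauliFam, pxor, X2, Z2, Matrix.mul_apply, Fin.sum_univ_two, Matrix.one_apply,
              Matrix.smul_apply, zv0, zv1, zv2, zv3, pow_succ, Complex.ext_iff]⟩
lemma kron_pauli_mul (B C : Fin m → Fin 4) : ∃ p : ZMod 4,
    (kronPow m fun k => pauliFam (B k)) * (kronPow m fun k => pauliFam (C k))
      = Complex.I ^ p.val • kronPow m fun k => pauliFam (pxor (B k) (C k)) := by
  choose p hp using letter_mul
  refine ⟨∑ k, p (B k) (C k), ?_⟩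
  rw [kron_mul]
  have h : (fun k => pauliFam (B k) * pauliFam (C k))
      = fun k => Complex.I ^ (p (B k) (C k)).val • pauliFam (pxor (B k) (C k)) := by
    funext k; exact hp _ _
  rw [h, kron_smul, Ipow_val_sum]

lemma trace_pauli (a b : Fin 4) :
    (pauliFam a * (pauliFam b)ᴴ).trace = if a = b then 2 else 0 := by
  fin_cases a <;> fin_cases b <;>
    simp [pauliFam, X2, Z2, Matrix.trace, Matrix.diag, Matrix.mul_apply, Fin.sum_univ_two,
      Matrix.conjTranspose_apply, Matrix.one_apply, Matrix.smul_apply, Complex.ext_iff] <;> norm_num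

lemma trace_kron_pauli (B C : Fin m → Fin 4) :
    ((kronPow m fun k => pauliFam (B k)) * (kronPow m fun k => (pauliFam (C k))ᴴ)).trace
      = if B = C then (2 : ℂ) ^ m else 0 := by
  rw [kron_mul, kron_trace]
  by_cases h : B = C
  · subst h
    rw [if_pos rfl]
    have : ∀ k : Fin m, (pauliFam (B k) * (pauliFam (B k))ᴴ).trace = 2 := by
      intro k; rw [trace_pauli, if_pos rfl]
    simp [this, Finset.prod_const]
  · rw [if_neg h]
    obtain ⟨k0, hk0⟩ := Function.ne_iff.mp h
    exact Finset.prod_eq_zero (Finset.mem_univ k0) (by rw [trace_pauli, if_neg hk0])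

lemma smul_kron_inj {μ ν : ZMod 4} {B C : Fin m → Fin 4}
    (h : Complex.I ^ μ.val • (kronPow m fun k => pauliFam (B k))
       = Complex.I ^ ν.val • kronPow m fun k => pauliFam (C k)) : μ = ν ∧ B = C := by
  have h2 := congrArg
    (fun M => (M * (kronPow m fun k => (pauliFam (C k))ᴴ)).trace) h
  simp only [Matrix.smul_mul, Matrix.trace_smul, smul_eq_mul] at h2
  rw [trace_kron_pauli, trace_kron_pauli, if_pos rfl] at h2
  have h2m : (2 : ℂ) ^ m ≠ 0 := pow_ne_zero _ two_ne_zero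
  have hI : Complex.I ^ ν.val ≠ 0 := pow_ne_zero _ Complex.I_ne_zero
  have hBC : B = C := by
    by_contra hne
    rw [if_neg hne, mul_zero] at h2
    exact hI (by
      have := h2.symm
      rcases mul_eq_zero.mp this with h' | h'
      · exact h'
      · exact absurd h' h2m)
  subst hBC
  rw [if_pos rfl] at h2
  exact ⟨Ipow_inj (mul_right_cancel₀ h2m h2), rfl⟩
lemma sort_insert_max (s : Finset (Fin (2 * m))) (a : Fin (2 * m)) (h : ∀ x ∈ s, x < a) :
    (insert a s).sort (· ≤ ·) = s.sort (· ≤ ·) ++ [a] := by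
  have ha : a ∉ s := fun hmem => lt_irrefl a (h a hmem)
  haveI : IsAntisymm (Fin (2 * m)) (· ≤ ·) := ⟨fun _ _ h h' => le_antisymm h h'⟩
  have hperm : ((insert a s).sort (· ≤ ·)).Perm (s.sort (· ≤ ·) ++ [a]) :=
    ((Finset.sort_perm_toList _ _).trans
      ((Finset.toList_insert ha).trans
        (List.Perm.cons a (Finset.sort_perm_toList _ _).symm))).trans
      (List.perm_append_singleton a _).symm
  have hsorted : (s.sort (· ≤ ·) ++ [a]).Pairwise (· ≤ ·) := by
    refine List.pairwise_append.mpr ⟨Finset.pairwise_sort _ _, by simp, ?_⟩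
    intro x hx y hy
    rw [List.mem_singleton] at hy
    subst hy
    exact le_of_lt (h x ((Finset.mem_sort _).mp hx))
  exact List.Perm.eq_of_pairwise' (Finset.pairwise_sort _ _) hsorted hperm

lemma Eprod_insert (s : Finset (Fin (2 * m))) (a : Fin (2 * m)) (h : ∀ x ∈ s, x < a) :
    Eprod m (insert a s) = Eprod m s * Egen m a := by
  unfold Eprod
  rw [sort_insert_max s a h, List.map_append, List.prod_append]
  simp

lemma e1_insert {s : Finset (Fin (2 * m))} {a : Fin (2 * m)} (ha : a ∉ s) (j : Fin m) :
    e1 (insert a s) j = e1 s j + (if idx1 m j = a then 1 else 0) := by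
  unfold e1
  by_cases h : idx1 m j = a
  · rw [if_pos h, if_pos (Finset.mem_insert.mpr (Or.inl h)),
      if_neg (fun hm => ha (h ▸ hm))]
    ring
  · rw [if_neg h, add_zero]
    congr 1
    simp [Finset.mem_insert, h]

lemma e2_insert {s : Finset (Fin (2 * m))} {a : Fin (2 * m)} (ha : a ∉ s) (j : Fin m) :
    e2 (insert a s) j = e2 s j + (if idx2 m j = a then 1 else 0) := by
  unfold e2
  by_cases h : idx2 m j = a
  · rw [if_pos h, if_pos (Finset.mem_insert.mpr (Or.inl h)),
      if_neg (fun hm => ha (h ▸ hm))]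
    ring
  · rw [if_neg h, add_zero]
    congr 1
    simp [Finset.mem_insert, h]

lemma cnt_insert {s : Finset (Fin (2 * m))} {a : Fin (2 * m)} (ha : a ∉ s) (j : Fin m) :
    cntZ (insert a s) j = cntZ s j + (if j.val < site m a then 1 else 0) := by
  unfold cntZ
  rw [Finset.filter_insert]
  by_cases h : j.val < site m a
  · rw [if_pos h, if_pos h,
      Finset.card_insert_of_notMem (fun hm => ha (Finset.mem_of_mem_filter a hm))]
    push_cast
    ring
  · rw [if_neg h, if_neg h, add_zero]

lemma pair0 : (0 : Fin 4) = pair 0 0 := by decide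
lemma pair1 : (1 : Fin 4) = pair 1 0 := by decide
lemma pair2 : (2 : Fin 4) = pair 0 1 := by decide
lemma pair3 : (3 : Fin 4) = pair 1 1 := by decide

lemma pair_eq {x z x' z' : ZMod 2} (hx : x = x') (hz : z = z') : pair x z = pair x' z' := by
  subst hx; subst hz; rfl

lemma Lfun_insert {s : Finset (Fin (2 * m))} {a : Fin (2 * m)} (ha : a ∉ s) (j : Fin m) :
    pxor (Lfun s j) (eL m a j) = Lfun (insert a s) j := by
  have hi1 : (idx1 m j = a) ↔ (a.val < m ∧ j.val = a.val) := by
    constructor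
    · intro h
      have hv : j.val = a.val := by
        have := congrArg Fin.val h
        simpa [idx1] using this
      exact ⟨hv ▸ j.isLt, hv⟩
    · rintro ⟨h1, h2⟩
      apply Fin.ext
      simpa [idx1] using h2
  have hi2 : (idx2 m j = a) ↔ (¬ a.val < m ∧ j.val = a.val - m) := by
    constructor
    · intro h
      have hv : j.val + m = a.val := by
        have := congrArg Fin.val h
        simpa [idx2] using this
      constructor <;> omega
    · rintro ⟨h1, h2⟩
      apply Fin.ext
      show j.val + m = a.val
      omega
  unfold Lfun
  rw [e1_insert ha, e2_insert ha, cnt_insert ha]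
  by_cases ham : a.val < m
  · have hsite : site m a = a.val := by simp [site, ham]
    simp only [eL, if_pos ham, hsite]
    rcases lt_trichotomy j.val a.val with h1 | h1 | h1
    · rw [if_pos h1, if_neg (by rw [hi1]; omega), if_neg (by rw [hi2]; omega),
        if_pos h1, pair2, xor_pair]
      exact pair_eq (by ring) (by ring)
    · rw [if_neg (by omega), if_pos h1, if_pos (hi1.mpr ⟨ham, h1⟩),
        if_neg (by rw [hi2]; omega), if_neg (by omega), pair3, xor_pair]
      exact pair_eq (by ring) (by ring)
    · rw [if_neg (by omega), if_neg (by omega), if_neg (by rw [hi1]; omega),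
        if_neg (by rw [hi2]; omega), if_neg (by omega), pair0, xor_pair]
      exact pair_eq (by ring) (by ring)
  · have hsite : site m a = a.val - m := by simp [site, ham]
    simp only [eL, if_neg ham, hsite]
    rcases lt_trichotomy j.val (a.val - m) with h1 | h1 | h1
    · rw [if_pos h1, if_neg (by rw [hi1]; omega), if_neg (by rw [hi2]; omega),
        if_pos h1, pair2, xor_pair]
      exact pair_eq (by ring) (by ring)
    · rw [if_neg (by omega), if_pos h1, if_neg (by rw [hi1]; omega),
        if_pos (hi2.mpr ⟨ham, h1⟩), if_neg (by omega), pair1, xor_pair]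
      exact pair_eq (by ring) (by ring)
    · rw [if_neg (by omega), if_neg (by omega), if_neg (by rw [hi1]; omega),
        if_neg (by rw [hi2]; omega), if_neg (by omega), pair0, xor_pair]
      exact pair_eq (by ring) (by ring)

lemma eprod_eq (α : Finset (Fin (2 * m))) : ∃ φ : ZMod 4,
    Eprod m α = Complex.I ^ φ.val • kronPow m fun j => pauliFam (Lfun α j) := by
  induction α using Finset.induction_on_max with
  | empty =>
      refine ⟨0, ?_⟩
      have hL : ∀ j : Fin m, Lfun (∅ : Finset (Fin (2 * m))) j = 0 := by
        intro j
        rw [pair0]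
        unfold Lfun e1 e2 cntZ
        simp
      have hfun : (fun j : Fin m => pauliFam (Lfun (∅ : Finset (Fin (2 * m))) j))
          = fun _ => (1 : Matrix (Fin 2) (Fin 2) ℂ) := by
        funext j; rw [hL]; rfl
      rw [hfun, kron_one, zv0, pow_zero, one_smul]
      simp [Eprod]
  | insert a s hlt ih =>
      obtain ⟨φ, hφ⟩ := ih
      obtain ⟨p, hp⟩ := kron_pauli_mul (Lfun s) (eL m a)
      have ha : a ∉ s := fun hmem => lt_irrefl a (hlt a hmem)
      refine ⟨φ + 1 + p, ?_⟩
      rw [Eprod_insert s a hlt, hφ, Egen_eq, Matrix.smul_mul, Matrix.mul_smul, hp]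
      have hLs : (fun j => pauliFam (pxor (Lfun s j) (eL m a j)))
          = fun j => pauliFam (Lfun (insert a s) j) := by
        funext j
        rw [Lfun_insert ha]
      rw [hLs, smul_smul, smul_smul, ← Ipow_val_add, ← Ipow_val_add]
def sumf (m : ℕ) : Fin m ⊕ Fin m → Fin (2 * m) := fun x =>
  match x with
  | .inl j => idx1 m j
  | .inr j => idx2 m j

lemma sumf_bij : Function.Bijective (sumf m) := by
  constructor
  · rintro (j | j) (j' | j') h <;> simp only [sumf] at h <;>
      first
        | (congr 1
           apply Fin.ext
           have := congrArg Fin.val h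
           simp only [idx1, idx2] at this
           omega)
        | (exfalso
           have := congrArg Fin.val h
           have h1 := j.isLt
           have h2 := j'.isLt
           simp only [idx1, idx2] at this
           omega)
  · intro k
    by_cases h : k.val < m
    · exact ⟨.inl ⟨k.val, h⟩, Fin.ext rfl⟩
    · refine ⟨.inr ⟨k.val - m, by omega⟩, Fin.ext ?_⟩
      show (k.val - m) + m = k.val
      omega

noncomputable def sumEquiv (m : ℕ) : Fin m ⊕ Fin m ≃ Fin (2 * m) :=
  Equiv.ofBijective _ sumf_bij

lemma site_idx1 (j : Fin m) : site m (idx1 m j) = j.val := by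
  simp [site, idx1, j.isLt]

lemma site_idx2 (j : Fin m) : site m (idx2 m j) = j.val := by
  have hj := j.isLt
  simp only [site, idx2]
  show (if j.val + m < m then j.val + m else j.val + m - m) = j.val
  rw [if_neg (by omega)]
  omega

lemma cnt_sum_nat (α : Finset (Fin (2 * m))) (j : Fin m) :
    (α.filter fun k => j.val < site m k).card
      = ∑ j' : Fin m, if j.val < j'.val then
          ((if idx1 m j' ∈ α then 1 else 0) + (if idx2 m j' ∈ α then 1 else 0)) else 0 := by
  have h1 : α.filter (fun k => j.val < site m k)
      = Finset.univ.filter (fun k => k ∈ α ∧ j.val < site m k) := by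
    ext k
    simp [Finset.mem_filter]
  rw [h1, Finset.card_filter]
  rw [← Equiv.sum_comp (sumEquiv m)
    (fun k => if k ∈ α ∧ j.val < site m k then 1 else 0), Fintype.sum_sum_type]
  rw [← Finset.sum_add_distrib]
  refine Finset.sum_congr rfl fun j' _ => ?_
  show (if idx1 m j' ∈ α ∧ j.val < site m (idx1 m j') then 1 else 0)
      + (if idx2 m j' ∈ α ∧ j.val < site m (idx2 m j') then 1 else 0) = _
  rw [site_idx1, site_idx2]
  by_cases hj : j.val < j'.val <;> simp [hj, and_comm]

lemma cnt_sum (α : Finset (Fin (2 * m))) (j : Fin m) :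
    cntZ α j = ∑ j' : Fin m, if j.val < j'.val then e1 α j' + e2 α j' else 0 := by
  unfold cntZ
  rw [cnt_sum_nat]
  push_cast
  refine Finset.sum_congr rfl fun j' _ => ?_
  unfold e1 e2
  by_cases hj : j.val < j'.val <;> simp [hj]

lemma Lfun_injective :
    Function.Injective (Lfun : Finset (Fin (2 * m)) → (Fin m → Fin 4)) := by
  intro α α' h
  have hx : ∀ j : Fin m, e1 α j + e2 α j = e1 α' j + e2 α' j := by
    intro j
    exact (pair_inj (congrFun h j)).1
  have hz : ∀ j : Fin m, e1 α j + cntZ α j = e1 α' j + cntZ α' j := by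
    intro j
    exact (pair_inj (congrFun h j)).2
  have hcnt : ∀ j : Fin m, cntZ α j = cntZ α' j := by
    intro j
    rw [cnt_sum, cnt_sum]
    exact Finset.sum_congr rfl fun j' _ => by rw [hx j']
  have he1 : ∀ j : Fin m, e1 α j = e1 α' j := by
    intro j
    have := hz j
    rw [hcnt j] at this
    exact add_right_cancel this
  have he2 : ∀ j : Fin m, e2 α j = e2 α' j := by
    intro j
    have := hx j
    rw [he1 j] at this
    exact add_left_cancel this
  ext k
  rcases (sumEquiv m).surjective k with ⟨x, rfl⟩
  cases x with
  | inl j =>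
      have h1 := he1 j
      unfold e1 at h1
      show idx1 m j ∈ α ↔ idx1 m j ∈ α'
      by_cases hm1 : idx1 m j ∈ α <;> by_cases hm2 : idx1 m j ∈ α' <;>
        simp_all
  | inr j =>
      have h1 := he2 j
      unfold e2 at h1
      show idx2 m j ∈ α ↔ idx2 m j ∈ α'
      by_cases hm1 : idx2 m j ∈ α <;> by_cases hm2 : idx2 m j ∈ α' <;>
        simp_all

lemma Lfun_bijective :
    Function.Bijective (Lfun : Finset (Fin (2 * m)) → (Fin m → Fin 4)) := by
  rw [Fintype.bijective_iff_injective_and_card]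
  refine ⟨Lfun_injective, ?_⟩
  rw [Fintype.card_finset, Fintype.card_fun]
  simp only [Fintype.card_fin]
  rw [show (4 : ℕ) = 2 ^ 2 by norm_num, ← pow_mul]
lemma val2_lift (l : ZMod 2) : ((l.val : ZMod 4)).val = l.val := by
  apply ZMod.val_cast_of_lt
  have := l.val_lt
  omega

lemma scal (l : ZMod 2) (φ : ZMod 4) (K : Matrix (Fin m → Fin 2) (Fin m → Fin 2) ℂ) :
    Complex.I ^ l.val • Complex.I ^ φ.val • K
      = Complex.I ^ (((l.val : ZMod 4)) + φ).val • K := by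
  rw [smul_smul, Ipow_val_add, val2_lift]

lemma I2neg : Complex.I ^ (2 : ZMod 4).val = -1 := by
  rw [zv2]; exact Complex.I_sq

lemma scalneg (l : ZMod 2) (φ : ZMod 4) (K : Matrix (Fin m → Fin 2) (Fin m → Fin 2) ℂ) :
    -(Complex.I ^ l.val • Complex.I ^ φ.val • K)
      = Complex.I ^ (((l.val : ZMod 4)) + φ + 2).val • K := by
  rw [scal, ← neg_smul]
  congr 1
  rw [Ipow_val_add ((l.val : ZMod 4) + φ) 2, I2neg]
  ring

theorem Bset_union_neg_eq_pauliGroup (m : ℕ) :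
    Bset m ∪ ((fun A => -A) '' Bset m) = PauliGroup m ∧
    Bset m ∩ ((fun A => -A) '' Bset m) = ∅ := by
  constructor
  · apply Set.eq_of_subset_of_subset
    · rintro A (⟨l, α, rfl⟩ | ⟨A', ⟨l, α, rfl⟩, rfl⟩)
      · obtain ⟨φ, hφ⟩ := eprod_eq α
        exact ⟨(l.val : ZMod 4) + φ, Lfun α, by rw [hφ, scal]⟩
      · obtain ⟨φ, hφ⟩ := eprod_eq α
        exact ⟨(l.val : ZMod 4) + φ + 2, Lfun α, by
          show -(Complex.I ^ l.val • Eprod m α) = _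
          rw [hφ, scalneg]⟩
    · rintro A ⟨μ, B, rfl⟩
      obtain ⟨α, rfl⟩ := (Lfun_bijective (m := m)).surjective B
      obtain ⟨φ, hφ⟩ := eprod_eq α
      have hd : μ - φ = 0 ∨ μ - φ = 1 ∨ μ - φ = 2 ∨ μ - φ = 3 := by
        have h4 : ∀ d : ZMod 4, d = 0 ∨ d = 1 ∨ d = 2 ∨ d = 3 := by decide
        exact h4 _
      rcases hd with hd | hd | hd | hd
      · left
        refine ⟨0, α, ?_⟩
        have hμ : μ = ((0 : ZMod 2).val : ZMod 4) + φ := by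
          have := sub_eq_zero.mp hd
          simpa using this
        rw [hφ, scal, ← hμ]
      · left
        refine ⟨1, α, ?_⟩
        have hμ : μ = (((1 : ZMod 2).val : ZMod 4)) + φ := by
          have h1 := sub_eq_iff_eq_add'.mp hd
          rw [h1]
          have : (((1 : ZMod 2).val : ZMod 4)) = 1 := by decide
          rw [this]
          ring
        rw [hφ, scal, ← hμ]
      · right
        refine ⟨Complex.I ^ (0 : ZMod 2).val • Eprod m α, ⟨0, α, rfl⟩, ?_⟩
        show -(Complex.I ^ (0 : ZMod 2).val • Eprod m α) = _
        have hμ : μ = (((0 : ZMod 2).val : ZMod 4)) + φ + 2 := by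
          have h1 := sub_eq_iff_eq_add'.mp hd
          rw [h1]
          have : (((0 : ZMod 2).val : ZMod 4)) = 0 := by decide
          rw [this]
          ring
        rw [hφ, scalneg, ← hμ]
      · right
        refine ⟨Complex.I ^ (1 : ZMod 2).val • Eprod m α, ⟨1, α, rfl⟩, ?_⟩
        show -(Complex.I ^ (1 : ZMod 2).val • Eprod m α) = _
        have hμ : μ = (((1 : ZMod 2).val : ZMod 4)) + φ + 2 := by
          have h1 := sub_eq_iff_eq_add'.mp hd
          rw [h1]
          have : (((1 : ZMod 2).val : ZMod 4)) = 1 := by decide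
          rw [this]
          ring
        rw [hφ, scalneg, ← hμ]
  · ext A
    simp only [Set.mem_inter_iff, Set.mem_image, Set.mem_empty_iff_false, iff_false]
    rintro ⟨⟨l, α, rfl⟩, A', ⟨l', α', rfl⟩, hneg⟩
    obtain ⟨φ, hφ⟩ := eprod_eq α
    obtain ⟨φ', hφ'⟩ := eprod_eq α'
    have hneg' : -(Complex.I ^ l'.val • Eprod m α') = Complex.I ^ l.val • Eprod m α := hneg
    rw [hφ, hφ', scalneg, scal] at hneg'
    obtain ⟨hc, hL⟩ := smul_kron_inj hneg'
    obtain rfl : α' = α := Lfun_injective hL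
    have hφφ' : φ = φ' := (smul_kron_inj (hφ.symm.trans hφ')).1
    subst hφφ'
    have key : ∀ (a b : ZMod 2) (c : ZMod 4),
        (b.val : ZMod 4) + c + 2 = (a.val : ZMod 4) + c → False := by decide
    exact key l l' φ hc
end

section
/- The 2m+2 vectors in F₂ ⊕ F₄^m given by y_k = [1{k even}, 0,...,0, ω², ω,...,ω] and y_{k+m} = [1{k even}, 0,...,0, 1, ω,...,ω] (with m-k zeros) for k = 1,...,m, together with y_{2m+1} = [1{m even}, ω,...,ω] and y_{2m+2} = [0,...,0], are pairwise distinct and satisfy: for all k ≠ l, the Hamming weight of y_k + y_l is odd. -/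
/-- y_k = [1{k even}, 0,…,0, ω², ω,…,ω] with m−k zeros, for k = 1,…,m. -/
def yA (m k : ℕ) : ZMod 2 × (Fin m → Fin 4) :=
  ((if Even k then 1 else 0),
    fun j => if j.val < m - k then 0 else if j.val = m - k then 3 else 2)

/-- y_{k+m} = [1{k even}, 0,…,0, 1, ω,…,ω] with m−k zeros, for k = 1,…,m. -/
def yB (m k : ℕ) : ZMod 2 × (Fin m → Fin 4) :=
  ((if Even k then 1 else 0),
    fun j => if j.val < m - k then 0 else if j.val = m - k then 1 else 2)

/-- y_{2m+1} = [1{m even}, ω,…,ω]. -/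
def yTop (m : ℕ) : ZMod 2 × (Fin m → Fin 4) :=
  ((if Even m then 1 else 0), fun _ => 2)

/-- The 2m+2 vectors of the maximal-rate square orthogonal design. -/
def squareODvectors (m : ℕ) : List (ZMod 2 × (Fin m → Fin 4)) :=
  ((List.range m).map (fun k => yA m (k + 1))) ++
  ((List.range m).map (fun k => yB m (k + 1))) ++
  [yTop m, ((0 : ZMod 2), fun _ => (0 : Fin 4))]

lemma add4_comm' : ∀ x y : Fin 4, add4 y x = add4 x y := by decide

lemma add4_eq_zero : ∀ x y : Fin 4, (add4 x y = 0 ↔ x = y) := by decide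

lemma add4_zero_right : ∀ x : Fin 4, add4 x 0 = x := by decide

lemma addV_comm {m : ℕ} (u v : ZMod 2 × (Fin m → Fin 4)) : addV u v = addV v u := by
  unfold addV
  exact Prod.ext (add_comm _ _) (funext fun j => add4_comm' _ _)

lemma count_eq {m : ℕ} (f : Fin m → Fin 4) (p : ℕ → Prop) [DecidablePred p]
    (h : ∀ j : Fin m, f j ≠ 0 ↔ p j.val) :
    (Finset.univ.filter fun j => f j ≠ 0).card = ((Finset.range m).filter p).card := by
  rw [Finset.filter_congr (fun j _ => h j), Finset.card_filter, Finset.card_filter,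
    Fin.sum_univ_eq_sum_range (fun i => if p i then 1 else 0)]

/-- generic step vector -/
def gen (m k : ℕ) (x : Fin 4) : ZMod 2 × (Fin m → Fin 4) :=
  ((if Even k then 1 else 0),
    fun j => if j.val < m - k then 0 else if j.val = m - k then x else 2)

lemma wt1_eq (k l : ℕ) :
    (if ((if Even k then (1:ZMod 2) else 0) + (if Even l then 1 else 0)) ≠ 0 then 1 else 0)
      = (k + l) % 2 := by
  have h11 : (1 : ZMod 2) + 1 = 0 := by decide
  have h10 : (1 : ZMod 2) + 0 ≠ 0 := by decide
  have h01 : (0 : ZMod 2) + 1 ≠ 0 := by decide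
  have h00 : ¬ ((0 : ZMod 2) + 0 ≠ 0) := by decide
  by_cases hk : Even k <;> by_cases hl : Even l <;>
    simp only [hk, hl, if_true, if_false, h11, h10, h01, h00, ne_eq, not_true, not_false_iff,
      ite_true, ite_false, not_not] <;>
    rw [Nat.even_iff] at * <;> omega

lemma odd_cross {m : ℕ} (k l : ℕ) (x y : Fin 4) (hx : x ≠ 2) (hy : y ≠ 0)
    (hk : 1 ≤ k) (hkl : k < l) (hl : l ≤ m) :
    Odd (wtV (addV (gen m k x) (gen m l y))) := by
  have hcount : (Finset.univ.filter fun j : Fin m =>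
      (addV (gen m k x) (gen m l y)).2 j ≠ 0).card = l - k + 1 := by
    rw [count_eq _ (fun n => m - l ≤ n ∧ n ≤ m - k) ?_]
    · have : (Finset.range m).filter (fun n => m - l ≤ n ∧ n ≤ m - k)
          = Finset.Icc (m - l) (m - k) := by
        ext n; simp only [Finset.mem_filter, Finset.mem_range, Finset.mem_Icc]; omega
      rw [this, Nat.card_Icc]; omega
    · intro j
      simp only [addV, gen, ne_eq, add4_eq_zero]
      rcases Nat.lt_trichotomy j.val (m - l) with h1 | h1 | h1
      · have h2 : j.val < m - k := by omega
        simp [h1, h2]; omega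
      · have h2 : m - l < m - k := by omega
        simp [h1, h2, eq_comm, hy]; omega
      · rcases Nat.lt_trichotomy j.val (m - k) with h2 | h2 | h2
        · have h3 : ¬ j.val < m - l := by omega
          have h4 : ¬ j.val = m - l := by omega
          simp [h2, h3, h4]; omega
        · have h3 : ¬ m - k < m - l := by omega
          have h4 : ¬ m - k = m - l := by omega
          simp [h2, h3, h4, hx]; omega
        · have h3 : ¬ j.val < m - l := by omega
          have h4 : ¬ j.val = m - l := by omega
          have h5 : ¬ j.val < m - k := by omega
          have h6 : ¬ j.val = m - k := by omega
          simp [h3, h4, h5, h6]; omega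
  have hfst : (addV (gen m k x) (gen m l y)).1
      = (if Even k then (1:ZMod 2) else 0) + (if Even l then 1 else 0) := rfl
  unfold wtV
  rw [hcount, hfst, wt1_eq, Nat.odd_iff]
  omega

lemma odd_eqthr {m : ℕ} (k : ℕ) (x y : Fin 4) (hxy : x ≠ y) (hk : 1 ≤ k) (hl : k ≤ m) :
    Odd (wtV (addV (gen m k x) (gen m k y))) := by
  have hcount : (Finset.univ.filter fun j : Fin m =>
      (addV (gen m k x) (gen m k y)).2 j ≠ 0).card = 1 := by
    rw [count_eq _ (fun n => n = m - k) ?_]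
    · have : (Finset.range m).filter (fun n => n = m - k) = {m - k} := by
        ext n; simp only [Finset.mem_filter, Finset.mem_range, Finset.mem_singleton]; omega
      rw [this, Finset.card_singleton]
    · intro j
      simp only [addV, gen, ne_eq, add4_eq_zero]
      rcases Nat.lt_trichotomy j.val (m - k) with h1 | h1 | h1
      · simp [h1]; omega
      · simp [h1, hxy]
      · have h2 : ¬ j.val < m - k := by omega
        have h3 : ¬ j.val = m - k := by omega
        simp [h2, h3]
  have hfst : (addV (gen m k x) (gen m k y)).1 = 0 := by
    show (if Even k then (1:ZMod 2) else 0) + (if Even k then 1 else 0) = 0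
    by_cases hk' : Even k <;> simp only [hk', ite_true, ite_false, if_true, if_false] <;> decide
  unfold wtV
  rw [hcount, hfst]
  simp

lemma addV_zero {m : ℕ} (u : ZMod 2 × (Fin m → Fin 4)) :
    addV u ((0 : ZMod 2), fun _ => (0 : Fin 4)) = u := by
  unfold addV
  exact Prod.ext (add_zero _) (funext fun j => add4_zero_right _)

lemma odd_wt_gen {m : ℕ} (k : ℕ) (x : Fin 4) (hx : x ≠ 0) (hk : 1 ≤ k) (hl : k ≤ m) :
    Odd (wtV (gen m k x)) := by
  have hcount : (Finset.univ.filter fun j : Fin m => (gen m k x).2 j ≠ 0).card = k := by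
    rw [count_eq _ (fun n => m - k ≤ n) ?_]
    · have : (Finset.range m).filter (fun n => m - k ≤ n) = Finset.Ico (m - k) m := by
        ext n; simp only [Finset.mem_filter, Finset.mem_range, Finset.mem_Ico]; omega
      rw [this, Nat.card_Ico]; omega
    · intro j
      simp only [gen, ne_eq]
      rcases Nat.lt_trichotomy j.val (m - k) with h1 | h1 | h1
      · simp [h1]; omega
      · have h2 : ¬ m - k < m - k := by omega
        simp [h1, hx]
      · have h2 : ¬ j.val < m - k := by omega
        have h3 : ¬ j.val = m - k := by omega
        simp [h2, h3]; omega
  have hfst : (if (gen m k x).1 ≠ 0 then 1 else 0) = (k + 1) % 2 := by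
    show (if (if Even k then (1:ZMod 2) else 0) ≠ 0 then 1 else 0) = (k + 1) % 2
    by_cases hk' : Even k
    · simp only [hk', ite_true, ne_eq, one_ne_zero, not_false_iff, if_true]
      rw [Nat.even_iff] at hk'; omega
    · rw [if_neg hk']
      rw [Nat.even_iff] at hk'
      simp only [ne_eq, not_true_eq_false, if_false, ite_false, not_not, ite_eq_right_iff]
      omega
  unfold wtV
  rw [hcount, hfst, Nat.odd_iff]
  omega

def yA' (m k : ℕ) : ZMod 2 × (Fin m → Fin 4) := gen m k 3
def yB' (m k : ℕ) : ZMod 2 × (Fin m → Fin 4) := gen m k 1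

lemma yTop_eq (m : ℕ) :
    ((if Even m then (1:ZMod 2) else 0), fun _ : Fin m => (2 : Fin 4)) = gen m m 2 := by
  refine Prod.ext rfl (funext fun j => ?_)
  show (2 : Fin 4) = if j.val < m - m then 0 else if j.val = m - m then 2 else 2
  rw [Nat.sub_self]
  have : ¬ j.val < 0 := Nat.not_lt_zero _
  rw [if_neg this]
  split <;> rfl

lemma not_R_self {m : ℕ} (u : ZMod 2 × (Fin m → Fin 4)) : ¬ Odd (wtV (addV u u)) := by
  have h1 : (addV u u).1 = 0 := CharTwo.add_self_eq_zero _
  have h2 : ∀ j, (addV u u).2 j = 0 := fun j => (add4_eq_zero _ _).2 rfl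
  unfold wtV
  rw [h1]
  simp [h2]

lemma odd_cross' {m : ℕ} (k l : ℕ) (x y : Fin 4) (hx : x ≠ 2) (hy : y ≠ 0) (hxy : x ≠ y)
    (hk : 1 ≤ k) (hkl : k ≤ l) (hl : l ≤ m) :
    Odd (wtV (addV (gen m k x) (gen m l y))) := by
  rcases Nat.lt_or_ge k l with h | h
  · exact odd_cross k l x y hx hy hk h hl
  · have : k = l := by omega
    subst this
    exact odd_eqthr k x y hxy hk hl

lemma pairwise_map_range {α : Type*} (R : α → α → Prop) (f : ℕ → α) (m : ℕ)
    (h : ∀ k l, k < l → l < m → R (f k) (f l)) : ((List.range m).map f).Pairwise R := by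
  rw [List.pairwise_map, List.pairwise_iff_getElem]
  intro i j hi hj hij
  simp only [List.length_range] at hi hj
  rw [List.getElem_range, List.getElem_range]
  exact h i j hij hj


def yTop' (m : ℕ) : ZMod 2 × (Fin m → Fin 4) :=
  ((if Even m then 1 else 0), fun _ => 2)

def squareODvectors' (m : ℕ) : List (ZMod 2 × (Fin m → Fin 4)) :=
  ((List.range m).map (fun k => yA' m (k + 1))) ++
  ((List.range m).map (fun k => yB' m (k + 1))) ++
  [yTop' m, ((0 : ZMod 2), fun _ => (0 : Fin 4))]

private theorem main' (m : ℕ) (hm : 1 ≤ m) :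
    (squareODvectors' m).Nodup ∧
    (squareODvectors' m).Pairwise (fun u v => Odd (wtV (addV u v))) := by
  have htop : yTop' m = gen m m 2 := yTop_eq m
  have hP : (squareODvectors' m).Pairwise (fun u v => Odd (wtV (addV u v))) := by
    unfold squareODvectors'
    rw [List.pairwise_append]
    refine ⟨?_, ?_, ?_⟩
    · rw [List.pairwise_append]
      refine ⟨?_, ?_, ?_⟩
      · refine pairwise_map_range (fun u v => Odd (wtV (addV u v))) (fun k => yA' m (k+1)) m ?_
        intro k l hkl hl
        exact odd_cross (k+1) (l+1) 3 3 (by decide) (by decide) (by omega) (by omega) (by omega)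
      · refine pairwise_map_range (fun u v => Odd (wtV (addV u v))) (fun k => yB' m (k+1)) m ?_
        intro k l hkl hl
        exact odd_cross (k+1) (l+1) 1 1 (by decide) (by decide) (by omega) (by omega) (by omega)
      · -- A vs B
        intro a ha b hb
        rw [List.mem_map] at ha hb
        obtain ⟨k, hk, rfl⟩ := ha
        obtain ⟨l, hl, rfl⟩ := hb
        rw [List.mem_range] at hk hl
        rcases Nat.lt_trichotomy k l with h | h | h
        · exact odd_cross (k+1) (l+1) 3 1 (by decide) (by decide) (by omega) (by omega) (by omega)
        · subst h
          exact odd_eqthr (k+1) 3 1 (by decide) (by omega) (by omega)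
        · rw [addV_comm]
          exact odd_cross (l+1) (k+1) 1 3 (by decide) (by decide) (by omega) (by omega) (by omega)
    · -- pairwise [t, z]
      refine List.Pairwise.cons ?_ (List.pairwise_singleton _ _)
      intro b hb
      rw [List.mem_singleton] at hb
      subst hb
      rw [addV_zero, htop]
      exact odd_wt_gen m 2 (by decide) hm le_rfl
    · -- (A ++ B) vs [t,z]
      intro a ha b hb
      have hgen : ∃ k x, 1 ≤ k ∧ k ≤ m ∧ (x = (1 : Fin 4) ∨ x = 3) ∧ a = gen m k x := by
        rcases List.mem_append.1 ha with ha | ha <;> rw [List.mem_map] at ha <;>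
          obtain ⟨k, hk, rfl⟩ := ha <;> rw [List.mem_range] at hk
        · exact ⟨k+1, 3, by omega, by omega, Or.inr rfl, rfl⟩
        · exact ⟨k+1, 1, by omega, by omega, Or.inl rfl, rfl⟩
      obtain ⟨k, x, hk1, hk2, hx, rfl⟩ := hgen
      have hx2 : x ≠ 2 := by rcases hx with rfl | rfl <;> decide
      have hx0 : x ≠ 0 := by rcases hx with rfl | rfl <;> decide
      have hxne2 : x ≠ (2 : Fin 4) := hx2
      rcases List.mem_cons.1 hb with rfl | hb
      · rw [htop]
        exact odd_cross' k m x 2 hx2 (by decide) hx2 hk1 hk2 le_rfl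
      · rw [List.mem_singleton] at hb
        subst hb
        rw [addV_zero]
        exact odd_wt_gen k x hx0 hk1 hk2
  refine ⟨?_, hP⟩
  refine List.Pairwise.imp ?_ hP
  intro a b h he
  exact not_R_self b (by rw [he] at h; exact h)

theorem squareOD_vectors_distinct_pairwise_odd (m : ℕ) (hm : 1 ≤ m) :
    (squareODvectors m).Nodup ∧
    (squareODvectors m).Pairwise (fun u v => Odd (wtV (addV u v))) := by
  have h := main' m hm
  have he : squareODvectors m = squareODvectors' m := rfl
  rw [he]
  exact h
end

section
/- Full-diversity extension: let A₁,...,A_{n+1} be invertible N×N complex matrices, and 𝒜₁,...,𝒜_n finite subsets of ℝ such that for any two distinct tuples (a₁,...,a_n) ≠ (b₁,...,b_n) in 𝒜₁×...×𝒜_n, the matrix Σᵢ (aᵢ - bᵢ)Aᵢ is invertible. Then for any positive integer Q there exists 𝒜_{n+1} ⊆ ℝ with |𝒜_{n+1}| = Q such that for any distinct tuples (a₁,...,a_{n+1}) ≠ (b₁,...,b_{n+1}) in 𝒜₁×...×𝒜_{n+1}, the matrix Σᵢ₌₁^{n+1} (aᵢ - bᵢ)Aᵢ is invertible. -/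
open Matrix Polynomial

lemma eval_charpoly' {N : ℕ} (B : Matrix (Fin N) (Fin N) ℂ) (c : ℂ) :
    (Matrix.charpoly B).eval c = (c • (1 : Matrix (Fin N) (Fin N) ℂ) - B).det := by
  have h1 : (charmatrix B).map (evalRingHom c) = c • (1 : Matrix (Fin N) (Fin N) ℂ) - B := by
    ext i j
    rcases eq_or_ne i j with rfl | h
    · simp [charmatrix_apply_eq, Matrix.smul_apply, Matrix.one_apply]
    · simp [charmatrix_apply_ne _ _ _ h, Matrix.smul_apply, Matrix.one_apply_ne h]
  calc (Matrix.charpoly B).eval c = (evalRingHom c) (charmatrix B).det := rfl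
  _ = ((charmatrix B).map (evalRingHom c)).det := by rw [RingHom.map_det]; rfl
  _ = _ := by rw [h1]

lemma det_add_smul {N : ℕ} (A M : Matrix (Fin N) (Fin N) ℂ) (hA : IsUnit A) (c : ℂ) :
    (M + c • A).det = A.det * (Matrix.charpoly (-(A⁻¹ * M))).eval c := by
  have hd : IsUnit A.det := (Matrix.isUnit_iff_isUnit_det A).mp hA
  rw [eval_charpoly', sub_neg_eq_add, ← Matrix.det_mul, Matrix.mul_add, Matrix.mul_smul,
    Matrix.mul_one, ← Matrix.mul_assoc, Matrix.mul_nonsing_inv A hd, Matrix.one_mul, add_comm]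

lemma bad_finite {N : ℕ} (A M : Matrix (Fin N) (Fin N) ℂ) (hA : IsUnit A) :
    {d : ℝ | ¬ IsUnit (M + (d : ℂ) • A)}.Finite := by
  have hd : IsUnit A.det := (Matrix.isUnit_iff_isUnit_det A).mp hA
  set p := Matrix.charpoly (-(A⁻¹ * M)) with hp
  have hp0 : p ≠ 0 := (Matrix.charpoly_monic _).ne_zero
  have hsub : {d : ℝ | ¬ IsUnit (M + (d : ℂ) • A)} ⊆
      (fun d : ℝ => (d : ℂ)) ⁻¹' {c | p.IsRoot c} := by
    intro d hdmem
    simp only [Set.mem_setOf_eq] at hdmem ⊢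
    by_contra hroot
    apply hdmem
    rw [Matrix.isUnit_iff_isUnit_det, isUnit_iff_ne_zero, det_add_smul A M hA]
    exact mul_ne_zero (isUnit_iff_ne_zero.mp hd) hroot
  exact Set.Finite.subset ((finite_setOf_isRoot hp0).preimage
    (Complex.ofReal_injective.injOn)) hsub

lemma exists_diff_avoid (B : Set ℝ) (hB : B.Finite) (k : ℕ) :
    ∃ T : Finset ℝ, T.card = k ∧ ∀ s ∈ T, ∀ t ∈ T, s ≠ t → s - t ∉ B := by
  induction k with
  | zero => exact ⟨∅, rfl, by simp⟩
  | succ k ih =>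
    obtain ⟨T, hTcard, hT⟩ := ih
    have hfin : (↑T ∪ ((fun p : ℝ × ℝ => p.1 + p.2) '' ((↑T : Set ℝ) ×ˢ B)) ∪
        ((fun p : ℝ × ℝ => p.1 - p.2) '' ((↑T : Set ℝ) ×ˢ B))).Finite := by
      refine (T.finite_toSet.union ?_).union ?_ <;>
        exact Set.Finite.image _ (T.finite_toSet.prod hB)
    obtain ⟨x, hx⟩ := hfin.infinite_compl.nonempty
    simp only [Set.mem_compl_iff, Set.mem_union, not_or] at hx
    obtain ⟨⟨hx1, hx2⟩, hx3⟩ := hx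
    refine ⟨insert x T, ?_, ?_⟩
    · rw [Finset.card_insert_of_notMem (by simpa using hx1), hTcard]
    · intro s hs t ht hst
      simp only [Finset.mem_insert] at hs ht
      rcases hs with rfl | hs <;> rcases ht with rfl | ht
      · exact absurd rfl hst
      · intro hmem
        exact hx2 ⟨(t, s - t), ⟨ht, hmem⟩, by ring⟩
      · intro hmem
        exact hx3 ⟨(s, s - t), ⟨hs, hmem⟩, by ring⟩
      · exact hT s hs t ht hst

/-- Full-diversity extension: a full-diversity single-real-symbol encodable
STBC in n symbols with invertible weight matrices can be extended by one more
symbol over a constellation of any prescribed size Q, preserving full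
diversity. -/
theorem full_diversity_extension (N n : ℕ)
    (A : Fin (n + 1) → Matrix (Fin N) (Fin N) ℂ)
    (hA : ∀ i, IsUnit (A i))
    (𝒜 : Fin n → Finset ℝ)
    (hfd : ∀ a b : Fin n → ℝ, (∀ i, a i ∈ 𝒜 i) → (∀ i, b i ∈ 𝒜 i) → a ≠ b →
      IsUnit (∑ i : Fin n, (a i - b i) • A i.castSucc))
    (Q : ℕ) (hQ : 0 < Q) :
    ∃ 𝒜' : Finset ℝ, 𝒜'.card = Q ∧
      ∀ a b : Fin (n + 1) → ℝ,
        (∀ i : Fin n, a i.castSucc ∈ 𝒜 i) → a (Fin.last n) ∈ 𝒜' →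
        (∀ i : Fin n, b i.castSucc ∈ 𝒜 i) → b (Fin.last n) ∈ 𝒜' →
        a ≠ b →
        IsUnit (∑ i : Fin (n + 1), (a i - b i) • A i) := by
  classical
  set S : Set (Fin n → ℝ) := Set.pi Set.univ (fun i => ↑(𝒜 i)) with hS
  have hSfin : S.Finite := Set.Finite.pi (fun i => (𝒜 i).finite_toSet)
  set M : (Fin n → ℝ) → (Fin n → ℝ) → Matrix (Fin N) (Fin N) ℂ :=
    fun a b => ∑ i : Fin n, (a i - b i) • A i.castSucc with hM
  set Bad : Set ℝ :=
    ⋃ a ∈ S, ⋃ b ∈ S, {d : ℝ | ¬ IsUnit (M a b + (d : ℂ) • A (Fin.last n))} with hBad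
  have hBadfin : Bad.Finite :=
    Set.Finite.biUnion hSfin (fun a _ => Set.Finite.biUnion hSfin
      (fun b _ => bad_finite (A (Fin.last n)) (M a b) (hA _)))
  obtain ⟨T, hTcard, hT⟩ := exists_diff_avoid Bad hBadfin Q
  refine ⟨T, hTcard, ?_⟩
  intro a b ha haT hb hbT hab
  set a' : Fin n → ℝ := fun i => a i.castSucc with ha'
  set b' : Fin n → ℝ := fun i => b i.castSucc with hb'
  set d : ℝ := a (Fin.last n) - b (Fin.last n) with hd
  have hsum : ∑ i : Fin (n + 1), (a i - b i) • A i
      = M a' b' + d • A (Fin.last n) := by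
    rw [Fin.sum_univ_castSucc]
  have hsmul : d • A (Fin.last n) = (d : ℂ) • A (Fin.last n) :=
    (algebraMap_smul ℂ d _).symm
  rw [hsum, hsmul]
  by_cases haa : a' = b'
  · -- first n coordinates agree, so the last must differ
    have hdne : d ≠ 0 := by
      intro h0
      apply hab
      funext i
      refine Fin.lastCases ?_ ?_ i
      · linarith [hd ▸ h0]
      · intro j
        exact congrFun haa j
    have hM0 : M a' b' = 0 := by
      rw [hM]
      refine Finset.sum_eq_zero (fun i _ => ?_)
      rw [show a' i - b' i = 0 by rw [haa]; ring, zero_smul]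
    rw [hM0, zero_add, Matrix.isUnit_iff_isUnit_det, Matrix.det_smul, isUnit_iff_ne_zero]
    exact mul_ne_zero (pow_ne_zero _ (Complex.ofReal_ne_zero.mpr hdne))
      (isUnit_iff_ne_zero.mp ((Matrix.isUnit_iff_isUnit_det _).mp (hA _)))
  · by_cases hd0 : d = 0
    · rw [hd0, Complex.ofReal_zero, zero_smul, add_zero]
      exact hfd a' b' (fun i => ha i) (fun i => hb i) haa
    · have hlast : a (Fin.last n) ≠ b (Fin.last n) := fun h => hd0 (by rw [hd, h, sub_self])
      have hnot : d ∉ Bad := hT _ haT _ hbT hlast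
      by_contra hcon
      apply hnot
      rw [hBad]
      refine Set.mem_biUnion (show a' ∈ S from fun i _ => ha i) ?_
      exact Set.mem_biUnion (show b' ∈ S from fun i _ => hb i) hcon
end
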